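/- For all k ≥ 60 and all m with 5 ≤ m ≤ k(k-1)/4, if the sequence d_{k-1} is strictly increasing on [5, (k-1)k/4] and weakly unimodal on [0, (k-1)k/2] (increasing up to its middle), then d_k(m-1) < d_k(m), using the recursion d_k(m) = d_{k-1}(m) + d_{k-1}(m-k). -/
import Mathlib
set_option maxHeartbeats 1000000

/-- `dd k m` is the number of partitions of `m` into distinct parts each at most `k`. -/
def dd (k m : ℕ) : ℕ :=
  Fintype.card {p : Nat.Partition m // p.parts.Nodup ∧ ∀ i ∈ p.parts, i ≤ k}

lemma dd_lt (k m : ℕ) (h : m < k) : dd k m = dd (k - 1) m := by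
  apply Fintype.card_congr
  apply Equiv.subtypeEquivRight
  intro p
  constructor
  · rintro ⟨hn, _⟩
    refine ⟨hn, fun i hi => ?_⟩
    have : i ≤ m := p.parts_sum ▸ Multiset.le_sum_of_mem hi
    omega
  · rintro ⟨hn, hb⟩
    exact ⟨hn, fun i hi => le_trans (hb i hi) (Nat.sub_le _ _)⟩

lemma dd_rec (k m : ℕ) (hk : 1 ≤ k) (h : k ≤ m) :
    dd k m = dd (k - 1) m + dd (k - 1) (m - k) := by
  classical
  have := Fintype.card_congr
    (Equiv.sumCompl (fun p : {p : Nat.Partition m // p.parts.Nodup ∧ ∀ i ∈ p.parts, i ≤ k} =>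
      k ∈ p.1.parts)).symm
  rw [dd, this, Fintype.card_sum, add_comm]
  congr 1
  · -- k ∉ parts case ≃ dd (k-1) m
    apply Fintype.card_congr
    refine { toFun := ?_, invFun := ?_, left_inv := ?_, right_inv := ?_ }
    · rintro ⟨⟨p, hn, hb⟩, hnk⟩
      refine ⟨p, hn, fun i hi => ?_⟩
      have := hb i hi
      have : i ≠ k := fun e => hnk (e ▸ hi)
      omega
    · rintro ⟨p, hn, hb⟩
      refine ⟨⟨p, hn, fun i hi => le_trans (hb i hi) (Nat.sub_le _ _)⟩, fun hmem => ?_⟩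
      have := hb k hmem
      omega
    · rintro ⟨⟨p, hn, hb⟩, hnk⟩; rfl
    · rintro ⟨p, hn, hb⟩; rfl
  · -- k ∈ parts case ≃ dd (k-1) (m - k)
    apply Fintype.card_congr
    refine { toFun := ?_, invFun := ?_, left_inv := ?_, right_inv := ?_ }
    · rintro ⟨⟨p, hn, hb⟩, hmem⟩
      refine ⟨⟨p.parts.erase k, ?_, ?_⟩, ?_, ?_⟩
      · intro i hi
        exact p.parts_pos (Multiset.mem_of_mem_erase hi)
      · have hmem' : k ∈ p.parts := hmem
        have hs := Multiset.sum_erase hmem'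
        have hps := p.parts_sum
        omega
      · exact hn.erase k
      · intro i hi
        rw [hn.mem_erase_iff] at hi
        have := hb i hi.2
        have := hi.1
        omega
    · rintro ⟨q, hqn, hqb⟩
      refine ⟨⟨⟨k ::ₘ q.parts, ?_, ?_⟩, ⟨?_, ?_⟩⟩, ?_⟩
      · intro i hi
        rcases Multiset.mem_cons.1 hi with rfl | hi
        · omega
        · exact q.parts_pos hi
      · rw [Multiset.sum_cons, q.parts_sum]; omega
      · rw [Multiset.nodup_cons]
        refine ⟨fun hmem => ?_, hqn⟩
        have := hqb k hmem
        omega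
      · intro i hi
        rcases Multiset.mem_cons.1 hi with rfl | hi
        · rfl
        · exact le_trans (hqb i hi) (Nat.sub_le _ _)
      · exact Multiset.mem_cons_self _ _
    · rintro ⟨⟨p, hn, hb⟩, hmem⟩
      apply Subtype.ext
      apply Subtype.ext
      apply Nat.Partition.ext
      exact Multiset.cons_erase hmem
    · rintro ⟨q, hqn, hqb⟩
      apply Subtype.ext
      apply Nat.Partition.ext
      exact Multiset.erase_cons_head _ _

/-- Induction step for almost strict unimodality: for `k ≥ 60`, if `d_{k-1}` is
strictly increasing on `[5, (k-1)k/4]` and weakly unimodal (increasing up to the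
middle `(k-1)k/4`, decreasing afterwards on `[0, (k-1)k/2]`), then
`d_k(m-1) < d_k(m)` for `5 ≤ m ≤ k(k-1)/4`. -/
theorem saxl_stmt9 (k : ℕ) (hk : 60 ≤ k)
    (hstrict : ∀ m, 5 ≤ m → m ≤ (k - 1) * k / 4 → dd (k - 1) (m - 1) < dd (k - 1) m)
    (hunim₁ : ∀ m, 1 ≤ m → m ≤ (k - 1) * k / 4 → dd (k - 1) (m - 1) ≤ dd (k - 1) m)
    (hunim₂ : ∀ m, (k - 1) * k / 4 ≤ m → m < (k - 1) * k / 2 →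
      dd (k - 1) (m + 1) ≤ dd (k - 1) m) :
    ∀ m, 5 ≤ m → m ≤ k * (k - 1) / 4 → dd k (m - 1) < dd k m := by
  intro m hm5 hmub
  have hcomm : k * (k - 1) = (k - 1) * k := Nat.mul_comm _ _
  rw [hcomm] at hmub
  have hkb : k ≤ (k - 1) * k / 4 := by
    rw [Nat.le_div_iff_mul_le (by norm_num)]
    have h4 : 4 * k ≤ (k - 1) * k := Nat.mul_le_mul_right k (by omega)
    linarith
  rcases lt_trichotomy m k with hlt | heq | hgt
  · rw [dd_lt k m hlt, dd_lt k (m - 1) (by omega)]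
    exact hstrict m hm5 hmub
  · subst heq
    rw [dd_lt m (m - 1) (by omega), dd_rec m m (by omega) le_rfl]
    calc dd (m - 1) (m - 1) < dd (m - 1) m := hstrict m hm5 hmub
      _ ≤ dd (m - 1) m + dd (m - 1) (m - m) := Nat.le_add_right _ _
  · rw [dd_rec k m (by omega) (by omega), dd_rec k (m - 1) (by omega) (by omega)]
    have h1 : dd (k - 1) (m - 1) < dd (k - 1) m := hstrict m hm5 hmub
    have h2 : dd (k - 1) (m - 1 - k) ≤ dd (k - 1) (m - k) := by
      have : m - 1 - k = m - k - 1 := by omega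
      rw [this]
      exact hunim₁ (m - k) (by omega) (by omega)
    exact Nat.add_lt_add_of_lt_of_le h1 h2
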